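/- Let L be a finite lattice and suppose ⊥ = x_0 ⋖ x_1 ⋖ ⋯ ⋖ x_k = ⊤ is a maximal chain of L each of whose elements is left modular. Let λ be the labeling assigning to each cover relation y ⋖ z the unique index i such that x_{i+1}/x_i weakly separates y ⋖ z. Then λ is an EL-labeling: for every w ≤ z in L, the interval [w, z] has exactly one maximal chain whose λ-label sequence, read from bottom to top, is weakly increasing, and the label sequence of this chain is strictly lexicographically smaller than the label sequence of every other maximal chain of [w, z]. -/

import Mathlib

private lemma liu_mono_cons {β : Type*} [Preorder β] {m : ℕ} (a : β) (g : Fin m → β)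
    (hg : Monotone g) (ha : ∀ i : Fin m, a ≤ g i) :
    Monotone (Fin.cons a g : Fin (m+1) → β) := by
  intro i j hij
  induction i using Fin.cases with
  | zero =>
    induction j using Fin.cases with
    | zero => exact le_rfl
    | succ t => simpa using ha t
  | succ s =>
    induction j using Fin.cases with
    | zero => exact absurd hij (by simp [Fin.le_def])
    | succ t => simpa using hg (Fin.succ_le_succ_iff.mp hij)

/-- Liu's theorem.  If `⊥ = x₀ ⋖ x₁ ⋖ ⋯ ⋖ x_k = ⊤` is a maximal chain of left
modular elements of a finite lattice `L`, then the weak-separation labeling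
`lab` is an EL-labeling: every interval `[w, z]` has exactly one maximal chain
with weakly increasing labels, and its label sequence is strictly
lexicographically smaller than that of every other maximal chain of `[w, z]`. -/
theorem leftModular_EL_labeling {L : Type*} [Lattice L]
    [BoundedOrder L] [Fintype L] {k : ℕ} (x : Fin (k + 1) → L)
    (hbot : x 0 = ⊥) (htop : x (Fin.last k) = ⊤)
    (hcov : ∀ i : Fin k, x i.castSucc ⋖ x i.succ)
    (hlm : ∀ i : Fin (k + 1), ∀ y z : L, y ≤ z →
      (y ⊔ x i) ⊓ z = y ⊔ (x i ⊓ z))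
    -- the labeling by weak separation
    (lab : L → L → Fin k)
    (hlab : ∀ y z : L, y ⋖ z →
      x (lab y z).castSucc ⊓ z = x (lab y z).castSucc ⊓ y ∧
        x (lab y z).succ ⊔ z = x (lab y z).succ ⊔ y) :
    ∀ w z : L, w ≤ z →
      ∃ (n : ℕ) (d : Fin (n + 1) → L),
        (d 0 = w ∧ d (Fin.last n) = z ∧ (∀ j : Fin n, d j.castSucc ⋖ d j.succ) ∧
          Monotone (fun j : Fin n => lab (d j.castSucc) (d j.succ))) ∧
        ∀ (p : ℕ) (e : Fin (p + 1) → L), e 0 = w → e (Fin.last p) = z →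
          (∀ j : Fin p, e j.castSucc ⋖ e j.succ) →
          (Monotone (fun j : Fin p => lab (e j.castSucc) (e j.succ)) →
            Set.range e = Set.range d) ∧
          (Set.range e ≠ Set.range d →
            List.Lex (· < ·)
              (List.ofFn (fun j : Fin n => ((lab (d j.castSucc) (d j.succ) : Fin k) : ℕ)))
              (List.ofFn (fun j : Fin p => ((lab (e j.castSucc) (e j.succ) : Fin k) : ℕ)))) := by
  classical
  have hxsm : StrictMono x := Fin.strictMono_iff_lt_succ.2 fun i => (hcov i).lt
  have hxmono : Monotone x := hxsm.monotone
  -- no index can both meet-agree and join-agree across a strict pair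
  have hdisj : ∀ y u : L, y < u → ∀ i : Fin (k+1), x i ⊓ u ≤ y → u ≤ x i ⊔ y → False := by
    intro y u hltyu i h1 h2
    have h3 : (y ⊔ x i) ⊓ u = y ⊔ (x i ⊓ u) := hlm i y u hltyu.le
    have h4 : u ≤ (y ⊔ x i) ⊓ u := le_inf (by rwa [sup_comm y (x i)]) le_rfl
    have : u ≤ y := by
      calc u ≤ (y ⊔ x i) ⊓ u := h4
        _ = y ⊔ (x i ⊓ u) := h3
        _ ≤ y ⊔ y := sup_le_sup_left h1 y
        _ = y := sup_idem y
    exact hltyu.not_ge this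
  -- uniqueness of the label
  have labeq : ∀ y u : L, y ⋖ u → ∀ j : Fin k,
      x j.castSucc ⊓ u ≤ y → u ≤ x j.succ ⊔ y → lab y u = j := by
    intro y u hc j h1 h2
    obtain ⟨hmeq, hjeq⟩ := hlab y u hc
    rcases lt_trichotomy (lab y u) j with h | h | h
    · exfalso
      have hle : ((lab y u).succ : Fin (k+1)) ≤ j.castSucc := by
        rw [Fin.le_def]; simpa using Fin.lt_def.mp h
      refine hdisj y u hc.lt (lab y u).succ
        (le_trans (inf_le_inf_right u (hxmono hle)) h1) ?_
      calc u ≤ x (lab y u).succ ⊔ u := le_sup_right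
        _ = x (lab y u).succ ⊔ y := hjeq
    · exact h
    · exfalso
      have hle : (j.succ : Fin (k+1)) ≤ (lab y u).castSucc := by
        rw [Fin.le_def]; simpa using Fin.lt_def.mp h
      refine hdisj y u hc.lt j.succ ?_ h2
      calc x j.succ ⊓ u ≤ x (lab y u).castSucc ⊓ u := inf_le_inf_right u (hxmono hle)
        _ = x (lab y u).castSucc ⊓ y := hmeq
        _ ≤ y := inf_le_right
  -- join cover lemma
  have L2 : ∀ (i : Fin k) (v t : L), v ⊔ x i.castSucc ≤ t → t ≤ v ⊔ x i.succ →
      t = v ⊔ x i.castSucc ∨ t = v ⊔ x i.succ := by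
    intro i v t h1 h2
    have hvt : v ≤ t := le_trans le_sup_left h1
    rcases (hcov i).eq_or_eq (c := x i.succ ⊓ t)
      (le_inf (hxmono (Fin.castSucc_le_succ i)) (le_trans le_sup_right h1)) inf_le_left with hc | hc
    · left
      have := hlm i.succ v t hvt
      rw [hc] at this
      calc t = (v ⊔ x i.succ) ⊓ t := (inf_eq_right.2 h2).symm
        _ = v ⊔ x i.castSucc := this
    · right
      have : x i.succ ≤ t := hc ▸ inf_le_right
      exact le_antisymm h2 (sup_le hvt this)
  -- meet-with-z cover lemma
  have L3 : ∀ (i : Fin k) (v zz : L), v ≤ zz →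
      (v ⊔ x i.castSucc) ⊓ zz = (v ⊔ x i.succ) ⊓ zz ∨
        (v ⊔ x i.castSucc) ⊓ zz ⋖ (v ⊔ x i.succ) ⊓ zz := by
    intro i v zz hvzz
    have hab : (v ⊔ x i.castSucc) ⊓ zz ≤ (v ⊔ x i.succ) ⊓ zz :=
      inf_le_inf_right _ (sup_le_sup_left (hxmono (Fin.castSucc_le_succ i)) _)
    rcases eq_or_lt_of_le hab with h | h
    · exact Or.inl h
    · refine Or.inr ⟨h, fun c hac hcb => ?_⟩
      have hwa : v ≤ (v ⊔ x i.castSucc) ⊓ zz := le_inf le_sup_left hvzz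
      have h1 : v ⊔ x i.castSucc ≤ c ⊔ x i.castSucc :=
        sup_le_sup_right (le_trans hwa hac.le) _
      have h2 : c ⊔ x i.castSucc ≤ v ⊔ x i.succ :=
        sup_le (le_trans hcb.le inf_le_left)
          (le_trans (hxmono (Fin.castSucc_le_succ i)) le_sup_right)
      have hcz : c ≤ zz := le_trans hcb.le inf_le_right
      rcases L2 i v (c ⊔ x i.castSucc) h1 h2 with hc | hc
      · refine hac.not_ge (le_inf (le_trans le_sup_left hc.le) hcz)
      · refine hcb.ne ?_
        have hxc : x i.castSucc ⊓ zz ≤ c :=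
          le_trans (le_inf (le_trans inf_le_left le_sup_right) inf_le_right) hac.le
        calc c = c ⊔ (x i.castSucc ⊓ zz) := (sup_eq_left.2 hxc).symm
          _ = (c ⊔ x i.castSucc) ⊓ zz := (hlm i.castSucc c zz hcz).symm
          _ = (v ⊔ x i.succ) ⊓ zz := by rw [hc]
  intro w z
  induction w using WellFounded.induction (IsWellFounded.wf (r := ((· > ·) : L → L → Prop))) with
  | _ w IH =>
  intro hwz
  rcases eq_or_lt_of_le hwz with rfl | hlt
  · -- trivial interval
    refine ⟨0, fun _ => w, ⟨rfl, rfl, fun j => j.elim0, fun a b _ => (by exact a.elim0)⟩, ?_⟩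
    intro p e he0 hel hec
    have hp0 : p = 0 := by
      by_contra hp
      have hsm : StrictMono e := Fin.strictMono_iff_lt_succ.2 fun j => (hec j).lt
      have h01 : (0 : Fin (p+1)) < Fin.last p := by
        rw [Fin.lt_def]; simp [Fin.val_last]; omega
      exact absurd (hsm h01) (by rw [he0, hel]; exact lt_irrefl w)
    subst hp0
    have he : e = fun _ => w := funext fun i => by rw [show i = 0 from Fin.ext (by omega), he0]
    constructor
    · intro _; rw [he]
    · intro hne; exact absurd (by rw [he]) hne
  · -- w < z
    have hPk : ∃ h : k < k + 1, (w ⊔ x ⟨k, h⟩) ⊓ z ≠ w := by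
      refine ⟨Nat.lt_succ_self k, ?_⟩
      show (w ⊔ x (Fin.last k)) ⊓ z ≠ w
      rw [htop, sup_top_eq, top_inf_eq]; exact hlt.ne'
    have hex : ∃ nn : ℕ, ∃ h : nn < k + 1, (w ⊔ x ⟨nn, h⟩) ⊓ z ≠ w := ⟨k, hPk⟩
    set N := Nat.find hex with hN
    obtain ⟨hNlt, hNne⟩ := Nat.find_spec hex
    have hNk : N ≤ k := Nat.find_le hPk
    have hN0 : 0 < N := by
      rcases Nat.eq_zero_or_pos N with h | h
      · exfalso
        apply hNne
        have h0 : (⟨N, hNlt⟩ : Fin (k+1)) = 0 := by ext; simp [h]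
        rw [h0, hbot, sup_bot_eq]
        exact inf_eq_left.2 hwz
      · exact h
    have hlowm : ∀ i : Fin (k+1), (i : ℕ) < N → (w ⊔ x i) ⊓ z = w := by
      intro i h
      have h2 := Nat.find_min hex h
      push_neg at h2
      simpa using h2 i.isLt
    set i₀ : Fin k := ⟨N - 1, by omega⟩ with hi₀
    have hival : (i₀ : ℕ) = N - 1 := by rw [hi₀]
    have hc0 : ((i₀.castSucc : Fin (k+1)) : ℕ) = N - 1 := by rw [Fin.coe_castSucc, hival]
    have hs0 : ((i₀.succ : Fin (k+1)) : ℕ) = N := by rw [Fin.val_succ, hival]; omega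
    have hmlow : (w ⊔ x i₀.castSucc) ⊓ z = w := hlowm _ (by rw [hc0]; omega)
    have hw'ne : (w ⊔ x i₀.succ) ⊓ z ≠ w := by
      have h0 : (i₀.succ : Fin (k+1)) = ⟨N, hNlt⟩ := by ext; rw [hs0]
      rw [h0]; exact hNne
    set w' := (w ⊔ x i₀.succ) ⊓ z with hw'
    have hww' : w ⋖ w' := by
      rcases L3 i₀ w z hwz with h | h
      · rw [← hw', hmlow] at h; exact absurd h.symm hw'ne
      · rwa [← hw', hmlow] at h
    have hw'z : w' ≤ z := by rw [hw']; exact inf_le_right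
    have hwltw' : w < w' := hww'.lt
    have hxi0z : x i₀.castSucc ⊓ z ≤ w := by
      calc x i₀.castSucc ⊓ z ≤ (w ⊔ x i₀.castSucc) ⊓ z := inf_le_inf_right z le_sup_right
        _ = w := hmlow
    have hlabww' : lab w w' = i₀ := by
      refine labeq w w' hww' i₀ ?_ ?_
      · exact le_trans (inf_le_inf_left _ hw'z) hxi0z
      · rw [hw']; exact le_trans inf_le_left (le_of_eq (sup_comm w (x i₀.succ)))
    have hfirst : ∀ u : L, w ⋖ u → u ≤ z → i₀ ≤ lab w u := by
      intro u hcu huz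
      by_contra hnot
      push_neg at hnot
      have hval : (((lab w u).succ : Fin (k+1)) : ℕ) < N := by
        rw [Fin.val_succ]
        have h2 := Fin.lt_def.mp hnot
        rw [hival] at h2; omega
      have hmu : (w ⊔ x (lab w u).succ) ⊓ z = w := hlowm _ hval
      have h2 : u ≤ x (lab w u).succ ⊔ w := le_sup_right.trans_eq (hlab w u hcu).2
      have h3 : u ≤ w := by
        calc u ≤ (w ⊔ x (lab w u).succ) ⊓ z :=
              le_inf (by rw [sup_comm]; exact h2) huz
          _ = w := hmu
      exact hcu.lt.not_ge h3
    have heqw' : ∀ u : L, w ⋖ u → u ≤ z → lab w u = i₀ → u = w' := by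
      intro u hcu huz hl
      have h2 : u ≤ x i₀.succ ⊔ w := by
        have h3 := (hlab w u hcu).2; rw [hl] at h3; exact le_sup_right.trans_eq h3
      have huw' : u ≤ w' := by
        rw [hw']; exact le_inf (by rw [sup_comm]; exact h2) huz
      rcases lt_or_eq_of_le huw' with h | h
      · exact absurd h (hww'.2 hcu.lt)
      · exact h
    have hm'low : ∀ i : Fin (k+1), (i : ℕ) ≤ N → (w' ⊔ x i) ⊓ z = w' := by
      intro i h
      rw [hlm i w' z hw'z]
      refine sup_eq_left.2 ?_
      have h2 : x i ≤ x i₀.succ := hxmono (by rw [Fin.le_def, hs0]; exact h)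
      calc x i ⊓ z ≤ x i₀.succ ⊓ z := inf_le_inf_right z h2
        _ ≤ (w ⊔ x i₀.succ) ⊓ z := inf_le_inf_right z le_sup_right
        _ = w' := hw'.symm
    have hsecond : ∀ u : L, w' ⋖ u → u ≤ z → i₀ < lab w' u := by
      intro u hcu huz
      by_contra hnot
      push_neg at hnot
      have hval : (((lab w' u).succ : Fin (k+1)) : ℕ) ≤ N := by
        rw [Fin.val_succ]
        have h2 := Fin.le_def.mp hnot
        rw [hival] at h2; omega
      have hmu := hm'low _ hval
      have h2 : u ≤ x (lab w' u).succ ⊔ w' := le_sup_right.trans_eq (hlab w' u hcu).2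
      have h3 : u ≤ w' := by
        calc u ≤ (w' ⊔ x (lab w' u).succ) ⊓ z :=
              le_inf (by rw [sup_comm]; exact h2) huz
          _ = w' := hmu
      exact hcu.lt.not_ge h3
    have hcsome : ∀ (q : ℕ) (e : Fin (q+1+1) → L), e 0 = w → e (Fin.last (q+1)) = z →
        (∀ j : Fin (q+1), e j.castSucc ⋖ e j.succ) →
        ∃ t : Fin (q+1), lab (e t.castSucc) (e t.succ) ≤ i₀ := by
      intro q e he0 hel hec
      by_contra hno
      push_neg at hno
      have key : ∀ t : Fin (q+1),
          (fun s : Fin (q+2) => x i₀.succ ⊓ e s) t.succ ≤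
            (fun s : Fin (q+2) => x i₀.succ ⊓ e s) t.castSucc := by
        intro t
        have hlt2 := hno t
        have hle : (i₀.succ : Fin (k+1)) ≤ (lab (e t.castSucc) (e t.succ)).castSucc := by
          rw [Fin.le_def, hs0, Fin.coe_castSucc]
          have h2 := Fin.lt_def.mp hlt2
          rw [hival] at h2; omega
        refine le_inf inf_le_left ?_
        calc x i₀.succ ⊓ e t.succ
            ≤ x (lab (e t.castSucc) (e t.succ)).castSucc ⊓ e t.succ :=
              inf_le_inf_right _ (hxmono hle)
          _ = x (lab (e t.castSucc) (e t.succ)).castSucc ⊓ e t.castSucc := (hlab _ _ (hec t)).1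
          _ ≤ e t.castSucc := inf_le_right
      have hanti := ((Fin.antitone_iff_succ_le (f := fun s : Fin (q+1+1) => x i₀.succ ⊓ e s)).mpr key) (Fin.zero_le (Fin.last (q+1)))
      simp only [he0, hel] at hanti
      apply hw'ne
      rw [hw', hlm i₀.succ w z hwz]
      exact sup_eq_left.2 (le_trans hanti inf_le_right)
    obtain ⟨n', d', ⟨hd0, hdl, hdc, hdm⟩, hduniq⟩ := IH w' hwltw' hw'z
    have hd'mono : Monotone d' := (Fin.strictMono_iff_lt_succ.2 fun t => (hdc t).lt).monotone
    have hd'z : ∀ t, d' t ≤ z := fun t => hdl ▸ hd'mono (Fin.le_last t)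
    have hd'lab : ∀ t : Fin n', i₀ ≤ lab (d' t.castSucc) (d' t.succ) := by
      intro t
      have hn' : 0 < n' := t.pos
      have h0 : ((⟨0, hn'⟩ : Fin n').castSucc : Fin (n'+1)) = 0 := by ext; rfl
      have hcv := hdc ⟨0, hn'⟩
      rw [h0, hd0] at hcv
      have hsec := hsecond _ hcv (hd'z _)
      have hmono := hdm (show (⟨0, hn'⟩ : Fin n') ≤ t by simp [Fin.le_def])
      calc i₀ ≤ lab w' (d' (⟨0, hn'⟩ : Fin n').succ) := hsec.le
        _ = lab (d' ((⟨0, hn'⟩ : Fin n').castSucc)) (d' (⟨0, hn'⟩ : Fin n').succ) := by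
            rw [h0, hd0]
        _ ≤ lab (d' t.castSucc) (d' t.succ) := hmono
    have hFcons : (fun j : Fin (n'+1) =>
          lab ((Fin.cons w d' : Fin (n'+2) → L) j.castSucc) ((Fin.cons w d' : Fin (n'+2) → L) j.succ))
        = Fin.cons i₀ (fun t : Fin n' => lab (d' t.castSucc) (d' t.succ)) := by
      funext j
      induction j using Fin.cases with
      | zero => simp [hd0, hlabww']
      | succ t => simp [← Fin.succ_castSucc, Fin.cons_succ]
    have hdlist : List.ofFn (fun j : Fin (n'+1) =>
          ((lab ((Fin.cons w d' : Fin (n'+2) → L) j.castSucc) ((Fin.cons w d' : Fin (n'+2) → L) j.succ) : Fin k) : ℕ))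
        = ((i₀ : Fin k) : ℕ) ::
            List.ofFn (fun t : Fin n' => ((lab (d' t.castSucc) (d' t.succ) : Fin k) : ℕ)) := by
      rw [List.ofFn_succ]
      refine congrArg₂ List.cons ?_ ?_
      · exact congrArg Fin.val (by simpa using congrFun hFcons 0)
      · refine congrArg List.ofFn (funext fun t => ?_)
        exact congrArg Fin.val (by simpa using congrFun hFcons t.succ)
    refine ⟨n' + 1, Fin.cons w d', ⟨?_, ?_, ?_, ?_⟩, ?_⟩
    · exact rfl
    · rw [← Fin.succ_last, Fin.cons_succ]; exact hdl
    · intro j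
      induction j using Fin.cases with
      | zero => simpa [hd0] using hww'
      | succ t =>
        rw [← Fin.succ_castSucc, Fin.cons_succ, Fin.cons_succ]
        exact hdc t
    · rw [hFcons]
      exact liu_mono_cons i₀ _ hdm hd'lab
    · intro p e he0 hel hec
      cases p with
      | zero =>
        exfalso
        have h0 : (Fin.last 0 : Fin 1) = 0 := rfl
        rw [h0, he0] at hel
        exact hlt.ne hel
      | succ p' =>
        set e' : Fin (p'+1) → L := Fin.tail e with he'
        have hcv0 : w ⋖ e' 0 := by
          have h2 := hec 0
          rw [Fin.castSucc_zero, he0] at h2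
          exact h2
        have he'l : e' (Fin.last p') = z := by
          show e (Fin.last p').succ = z
          rw [Fin.succ_last]; exact hel
        have he'c : ∀ j : Fin p', e' j.castSucc ⋖ e' j.succ := by
          intro j
          have h2 := hec j.succ
          rw [← Fin.succ_castSucc] at h2
          exact h2
        have he'0z : e' 0 ≤ z := by
          have hm' : Monotone e' := (Fin.strictMono_iff_lt_succ.2 fun t => (he'c t).lt).monotone
          exact he'l ▸ hm' (Fin.le_last 0)
        have hlabfirst : i₀ ≤ lab w (e' 0) := hfirst _ hcv0 he'0z
        have helab0 : lab (e ((0 : Fin (p'+1)).castSucc)) (e ((0 : Fin (p'+1)).succ))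
            = lab w (e' 0) := by
          rw [Fin.castSucc_zero, he0]; rfl
        have helabsucc : ∀ t : Fin p',
            lab (e (t.succ.castSucc)) (e (t.succ.succ)) = lab (e' t.castSucc) (e' t.succ) := by
          intro t; rw [← Fin.succ_castSucc]; rfl
        have hrange : Set.range e = insert w (Set.range e') := by
          rw [Fin.range_fin_succ, he0]
        constructor
        · intro hmon
          obtain ⟨t, ht⟩ := hcsome p' e he0 hel hec
          have h0t := hmon (Fin.zero_le t)
          simp only [helab0] at h0t
          have hle' : lab w (e' 0) = i₀ := le_antisymm (le_trans h0t ht) hlabfirst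
          have he'w' : e' 0 = w' := heqw' _ hcv0 he'0z hle'
          have hmon' : Monotone (fun t : Fin p' => lab (e' t.castSucc) (e' t.succ)) := by
            intro a b hab
            have h2 := hmon (Fin.succ_le_succ_iff.mpr hab)
            simpa only [helabsucc] using h2
          rw [hrange, (hduniq p' e' he'w' he'l he'c).1 hmon', Fin.range_cons]
        · intro hne
          rw [hdlist, List.ofFn_succ]
          rcases lt_or_eq_of_le hlabfirst with hlt2 | heq2
          · refine List.Lex.rel ?_
            rw [helab0]
            exact Fin.lt_def.mp hlt2
          · have he'w' : e' 0 = w' := heqw' _ hcv0 he'0z heq2.symm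
            have hne' : Set.range e' ≠ Set.range d' := by
              intro h
              apply hne
              rw [hrange, h, ← Fin.range_cons]
            have hlex := (hduniq p' e' he'w' he'l he'c).2 hne'
            have hhead : ((lab (e ((0 : Fin (p'+1)).castSucc)) (e ((0 : Fin (p'+1)).succ)) : Fin k) : ℕ)
                = ((i₀ : Fin k) : ℕ) := by rw [helab0, ← heq2]
            rw [hhead]
            have htail : (fun t : Fin p' =>
                  ((lab (e (t.succ.castSucc)) (e (t.succ.succ)) : Fin k) : ℕ))
                = fun t => ((lab (e' t.castSucc) (e' t.succ) : Fin k) : ℕ) :=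
              funext fun t => by rw [helabsucc]
            rw [htail]
            exact List.Lex.cons hlex
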